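/- Let Γ be a nonempty closed subset of EuclideanSpace ℝ (Fin n), let d(x) = infDist(x, Γ), and let x ∉ Γ be a point at which d is differentiable. If y ∈ Γ is a closest point to x, i.e., dist(x, y) = infDist(x, Γ), then the gradient of d at x equals the unit vector (x − y) / ‖x − y‖. -/

import Mathlib

open Metric

/-- At a point of differentiability of the distance function to a closed set `Γ`,
the gradient is the unit vector pointing from the closest point `y ∈ Γ` toward `x`. -/
theorem gradient_infDist_eq_unit_dir
    {n : ℕ} (Γ : Set (EuclideanSpace ℝ (Fin n))) (hne : Γ.Nonempty) (hcl : IsClosed Γ)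
    (x : EuclideanSpace ℝ (Fin n)) (hx : x ∉ Γ)
    (hd : DifferentiableAt ℝ (fun z => Metric.infDist z Γ) x)
    (y : EuclideanSpace ℝ (Fin n)) (hy : y ∈ Γ)
    (hxy : dist x y = Metric.infDist x Γ) :
    gradient (fun z => Metric.infDist z Γ) x = ‖x - y‖⁻¹ • (x - y) := by
  set f : EuclideanSpace ℝ (Fin n) → ℝ := fun z => Metric.infDist z Γ with hf
  have hfx : f x = dist x y := hxy.symm
  have hr : (0:ℝ) < ‖x - y‖ := by
    rw [← dist_eq_norm]
    exact dist_pos.2 (fun h => hx (h ▸ hy))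
  set r : ℝ := ‖x - y‖ with hrdef
  set u : EuclideanSpace ℝ (Fin n) := r⁻¹ • (x - y) with hudef
  have hru : r • u = x - y := by
    rw [hudef, smul_smul, mul_inv_cancel₀ hr.ne', one_smul]
  have hu : ‖u‖ = 1 := by
    rw [hudef, norm_smul, norm_inv, norm_norm, inv_mul_cancel₀ hr.ne']
  set g := gradient f x with hg
  have hF : HasFDerivAt f (InnerProductSpace.toDual ℝ _ g) x :=
    hd.hasGradientAt.hasFDerivAt
  -- the value of f along the segment
  have hval : ∀ t : ℝ, t ∈ Set.Icc (0:ℝ) r → f (x + t • (-u)) = f x - t := by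
    intro t ⟨ht0, htr⟩
    have hpt : x + t • (-u) - y = (r - t) • u := by
      rw [sub_smul, hru]
      module
    have hle : f (x + t • (-u)) ≤ f x - t := by
      calc f (x + t • (-u)) ≤ dist (x + t • (-u)) y := infDist_le_dist_of_mem hy
        _ = ‖(r - t) • u‖ := by rw [dist_eq_norm, hpt]
        _ = r - t := by rw [norm_smul, hu, mul_one, Real.norm_eq_abs,
            abs_of_nonneg (by linarith)]
        _ = f x - t := by rw [hfx, dist_eq_norm]
    have hge : f x - t ≤ f (x + t • (-u)) := by
      have := infDist_le_infDist_add_dist (x := x) (y := x + t • (-u)) (s := Γ)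
      have hdist : dist x (x + t • (-u)) = t := by
        rw [dist_eq_norm]
        simp [norm_smul, abs_of_nonneg ht0, hu]
      rw [hdist] at this
      linarith [this]
    linarith
  -- one-sided derivative
  have hcomp : HasDerivAt (fun t : ℝ => f (x + t • (-u)))
      ((InnerProductSpace.toDual ℝ _ g) (-u)) 0 := by
    have hline : HasDerivAt (fun t : ℝ => x + t • (-u)) (-u) 0 := by
      simpa using ((hasDerivAt_id (0:ℝ)).smul_const (-u)).const_add x
    have hF' : HasFDerivAt f ((InnerProductSpace.toDual ℝ _ g)) (x + (0:ℝ) • (-u)) := by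
      simpa using hF
    exact hF'.comp_hasDerivAt 0 hline
  have hW1 : HasDerivWithinAt (fun t : ℝ => f (x + t • (-u)))
      ((InnerProductSpace.toDual ℝ _ g) (-u)) (Set.Ici 0) 0 :=
    hcomp.hasDerivWithinAt
  have hW2 : HasDerivWithinAt (fun t : ℝ => f (x + t • (-u))) (-1) (Set.Ici 0) 0 := by
    have hbase : HasDerivWithinAt (fun t : ℝ => f x - t) (-1) (Set.Ici 0) 0 := by
      simpa using ((hasDerivAt_id (0:ℝ)).const_sub (f x)).hasDerivWithinAt
    refine hbase.congr_of_eventuallyEq ?_ ?_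
    · filter_upwards [Filter.inter_mem_inf (Metric.ball_mem_nhds (0:ℝ) hr)
        (Filter.mem_principal_self (Set.Ici (0:ℝ)))] with t ht
      obtain ⟨htb, hti⟩ := ht
      exact hval t ⟨hti, by
        have := abs_lt.1 (by simpa [Real.dist_eq] using htb)
        linarith [this.2]⟩
    · simpa using hval 0 ⟨le_refl _, hr.le⟩
  have huniq : (InnerProductSpace.toDual ℝ _ g) (-u) = -1 := by
    have h1 := hW1.derivWithin (uniqueDiffOn_Ici (0:ℝ) 0 Set.self_mem_Ici)
    have h2 := hW2.derivWithin (uniqueDiffOn_Ici (0:ℝ) 0 Set.self_mem_Ici)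
    rw [← h1, ← h2]
  have hinner : (inner ℝ g u : ℝ) = 1 := by
    have : (inner ℝ g (-u) : ℝ) = -1 := huniq
    simpa [inner_neg_right] using this
  -- norm bound
  have hgnorm : ‖g‖ ≤ 1 := by
    have := hF.le_of_lipschitz (lipschitz_infDist_pt Γ)
    simpa using this
  have hgone : ‖g‖ = 1 := by
    have hcs := real_inner_le_norm g u
    rw [hinner, hu, mul_one] at hcs
    linarith
  have heq : ‖u‖ • g = ‖g‖ • u := by
    rw [← inner_eq_norm_mul_iff_real]
    rw [hinner, hgone, hu, mul_one]
  rw [hu, hgone, one_smul, one_smul] at heq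
  exact heq
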